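/- Let k be a positive integer and let I ⊆ {1,…,k}. Let G be a (26k+24|I|)-connected graph and let S = {{s_1,t_1},…,{s_k,t_k}} be a set of k pairs of distinct vertices of G. Then some nice partition of G has a parity breaking matching for (S,I) if and only if every nice partition of G has a parity breaking matching for (S,I). -/

import Mathlib

universe u
variable {V : Type u}




/-- A graph is `k`-connected if it has more than `k` vertices and deleting any
set of fewer than `k` vertices leaves a connected graph. -/
def KConnected (G : SimpleGraph V) (k : ℕ) : Prop :=
  k < Nat.card V ∧ ∀ X : Set V, X.ncard < k → (G.induce Xᶜ).Connected

/-- A graph is bipartite if it is 2-colorable. -/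
def Bipartite (G : SimpleGraph V) : Prop := G.Colorable 2

/-- `X` is an odd cycle cover of `G` if `G - X` is bipartite. -/
def IsOddCycleCover (G : SimpleGraph V) (X : Set V) : Prop :=
  Bipartite (G.induce Xᶜ)

/-- `X` is a minimum odd cycle cover of `G`. -/
def IsMinOddCycleCover (G : SimpleGraph V) (X : Set V) : Prop :=
  IsOddCycleCover G X ∧ ∀ Y : Set V, IsOddCycleCover G Y → X.ncard ≤ Y.ncard

/-- The odd cycle cover `X` induces the partition `(A, B)`:
`(A \ X, B \ X)` is a bipartition of `G - X`, and a vertex of `X` lies in `A`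
(resp. `B`) if it has more neighbours in `B \ X` than in `A \ X`
(resp. more neighbours in `A \ X` than in `B \ X`). -/
def InducesPartition (G : SimpleGraph V) (X A B : Set V) : Prop :=
  (∀ u v, G.Adj u v → u ∉ X → v ∉ X → ¬(u ∈ A ∧ v ∈ A) ∧ ¬(u ∈ B ∧ v ∈ B)) ∧
  (∀ x ∈ X,
    ({y | G.Adj x y ∧ y ∈ A \ X}.ncard < {y | G.Adj x y ∧ y ∈ B \ X}.ncard → x ∈ A) ∧
    ({y | G.Adj x y ∧ y ∈ B \ X}.ncard < {y | G.Adj x y ∧ y ∈ A \ X}.ncard → x ∈ B))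

/-- `(A, B)` is a nice partition of `G`. -/
def IsNicePartition (G : SimpleGraph V) (A B : Set V) : Prop :=
  A ∪ B = Set.univ ∧ Disjoint A B ∧
    ∃ X : Set V, IsMinOddCycleCover G X ∧ InducesPartition G X A B

/-- The graph `G_{A,B} = G[A] ∪ G[B]`: edges of `G` with both ends in `A` or both in `B`. -/
def sideGraph (G : SimpleGraph V) (A B : Set V) : SimpleGraph V where
  Adj u v := G.Adj u v ∧ ((u ∈ A ∧ v ∈ A) ∨ (u ∈ B ∧ v ∈ B))
  symm := by
    constructor
    intro u v h
    exact ⟨h.1.symm, by tauto⟩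
  loopless := by
    constructor
    intro v h
    exact G.loopless.irrefl v h.1

/-- A parity breaking matching for `(S, I)` with respect to `(A, B)`, where
`S = {{s i, t i} : i}`: a matching `{m i : i ∈ I}` of edges of `G_{A,B}` such that
`m i` contains no vertex of `{s j, t j}` for `j ≠ i`. -/
def ParityBreakingMatching (G : SimpleGraph V) (A B : Set V) {k : ℕ}
    (s t : Fin k → V) (I : Finset (Fin k)) (m : Fin k → Sym2 V) : Prop :=
  (∀ i ∈ I, m i ∈ (sideGraph G A B).edgeSet) ∧
  (∀ i ∈ I, ∀ j ∈ I, i ≠ j → ∀ x ∈ m i, x ∉ m j) ∧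
  (∀ i ∈ I, ∀ j : Fin k, j ≠ i → s j ∉ m i ∧ t j ∉ m i)

/-- `P` is a family of pairwise vertex-disjoint paths, `P i` connecting `s i` and `t i`. -/
def DisjointPaths {k : ℕ} (G : SimpleGraph V) (s t : Fin k → V)
    (P : ∀ i, G.Walk (s i) (t i)) : Prop :=
  (∀ i, (P i).IsPath) ∧ ∀ i j, i ≠ j → ∀ x ∈ (P i).support, x ∉ (P j).support

/-- `G` is `k`-linked. -/
def KLinked (G : SimpleGraph V) (k : ℕ) : Prop :=
  ∀ s t : Fin k → V, Function.Injective (Sum.elim s t) →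
    ∃ P : ∀ i, G.Walk (s i) (t i), DisjointPaths G s t P

/-- `G` is parity-`k`-linked. -/
def ParityKLinked (G : SimpleGraph V) (k : ℕ) : Prop :=
  ∀ s t : Fin k → V, Function.Injective (Sum.elim s t) →
    ∀ p : Fin k → Bool,
      ∃ P : ∀ i, G.Walk (s i) (t i), DisjointPaths G s t P ∧
        ∀ i, (Odd (P i).length ↔ p i = true)

/-- A set of vertices is independent if no edge joins two of its vertices. -/
def IsIndepSet' (G : SimpleGraph V) (s : Set V) : Prop :=
  ∀ x ∈ s, ∀ y ∈ s, ¬ G.Adj x y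

/-- `G` is parity-`k`-linked restricted to independent sets. -/
def ParityKLinkedIndep (G : SimpleGraph V) (k : ℕ) : Prop :=
  ∀ s t : Fin k → V, Function.Injective (Sum.elim s t) →
    IsIndepSet' G (Set.range s ∪ Set.range t) →
    ∀ p : Fin k → Bool,
      ∃ P : ∀ i, G.Walk (s i) (t i), DisjointPaths G s t P ∧
        ∀ i, (Odd (P i).length ↔ p i = true)

/-- `G` contains `k` pairwise vertex-disjoint odd `S`-cycles. -/
def HasDisjointOddSCycles (G : SimpleGraph V) (S : Set V) (k : ℕ) : Prop :=
  ∃ (v : Fin k → V) (c : ∀ i, G.Walk (v i) (v i)),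
    (∀ i, (c i).IsCycle ∧ Odd (c i).length ∧ ∃ x ∈ S, x ∈ (c i).support) ∧
    ∀ i j, i ≠ j → ∀ x ∈ (c i).support, x ∉ (c j).support

/-- `G` contains an odd `S`-cycle. -/
def HasOddSCycle (G : SimpleGraph V) (S : Set V) : Prop :=
  ∃ (v : V) (c : G.Walk v v), c.IsCycle ∧ Odd c.length ∧ ∃ x ∈ S, x ∈ c.support

/-- `G` contains `k` pairwise vertex-disjoint odd cycles. -/
def HasDisjointOddCycles (G : SimpleGraph V) (k : ℕ) : Prop :=
  ∃ (v : Fin k → V) (c : ∀ i, G.Walk (v i) (v i)),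
    (∀ i, (c i).IsCycle ∧ Odd (c i).length) ∧
    ∀ i j, i ≠ j → ∀ x ∈ (c i).support, x ∉ (c j).support

/-- `C` is a vertex cover of `G`. -/
def IsVertexCover (G : SimpleGraph V) (C : Set V) : Prop :=
  ∀ e ∈ G.edgeSet, ∃ v ∈ C, v ∈ e

/-- The vertex cover number `τ(G)`. -/
noncomputable def vcNumber (G : SimpleGraph V) : ℕ :=
  sInf {n | ∃ C : Set V, IsVertexCover G C ∧ C.ncard = n}

/-- `P` is an odd `Z`-path: a path of odd length whose vertex set meets `Z`
exactly in its two end vertices. -/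
def IsOddZPath (G : SimpleGraph V) (Z : Set V) {u v : V} (P : G.Walk u v) : Prop :=
  P.IsPath ∧ Odd P.length ∧ u ∈ Z ∧ v ∈ Z ∧
    ∀ x ∈ P.support, x ∈ Z → x = u ∨ x = v



section Helpers

/-- membership complement in a partition -/
lemma part_mem_iff {A B : Set V} (hu : A ∪ B = Set.univ) (hd : Disjoint A B) (v : V) :
    v ∈ A ↔ v ∉ B := by
  constructor
  · intro hA hB; exact Set.disjoint_left.mp hd hA hB
  · intro hB
    have : v ∈ A ∪ B := hu ▸ Set.mem_univ v
    rcases this with h | h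
    · exact h
    · exact absurd h hB

lemma sideGraph_comm (G : SimpleGraph V) (A B : Set V) : sideGraph G A B = sideGraph G B A := by
  ext u v
  constructor <;> (rintro ⟨h, h2⟩; exact ⟨h, h2.symm⟩)

lemma ip_swap {G : SimpleGraph V} {X A B : Set V} (h : InducesPartition G X A B) :
    InducesPartition G X B A := by
  refine ⟨fun u v hadj hu hv => (h.1 u v hadj hu hv).symm, fun x hx => ⟨(h.2 x hx).2, (h.2 x hx).1⟩⟩

lemma pbm_comm {G : SimpleGraph V} {A B : Set V} {k : ℕ} {s t : Fin k → V}
    {I : Finset (Fin k)} {m : Fin k → Sym2 V}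
    (h : ParityBreakingMatching G B A s t I m) : ParityBreakingMatching G A B s t I m := by
  unfold ParityBreakingMatching at h ⊢
  rw [sideGraph_comm]
  exact h

/-- minimum degree from connectivity -/
lemma mindeg [Fintype V] {G : SimpleGraph V} {d : ℕ} (h : KConnected G d) (v : V) :
    d ≤ (G.neighborSet v).ncard := by
  by_contra hlt
  push_neg at hlt
  have hconn := h.2 (G.neighborSet v) hlt
  have hv : v ∈ (G.neighborSet v)ᶜ := by simp
  have h1 : (G.neighborSet v).ncard + (G.neighborSet v)ᶜ.ncard = Nat.card V :=
    Set.ncard_add_ncard_compl _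
  have h2 : 1 < (G.neighborSet v)ᶜ.ncard := by
    have := h.1; omega
  obtain ⟨u, hu, hne⟩ := Set.exists_ne_of_one_lt_ncard h2 v
  obtain ⟨p⟩ := hconn.preconnected ⟨v, hv⟩ ⟨u, hu⟩
  cases p with
  | nil => exact hne rfl
  | cons hadj p' =>
    rename_i b
    have hb : G.Adj v (b : V) := hadj
    exact b.2 hb

end Helpers

section Align

lemma step_iff {xA yA xA' yA' xB yB xB' yB' : Prop}
    (pa : xA ↔ ¬xB) (pc : yA ↔ ¬yB) (pa' : xA' ↔ ¬xB') (pc' : yA' ↔ ¬yB')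
    (e1 : ¬(xA ∧ yA) ∧ ¬(xB ∧ yB)) (e1' : ¬(xA' ∧ yA') ∧ ¬(xB' ∧ yB')) :
    (xA ↔ xA') ↔ (yA ↔ yA') := by
  constructor <;> intro h <;> constructor <;> intro h2 <;> tauto

/-- alignment of two bipartitions outside the union of the covers -/
lemma align [Fintype V] {G : SimpleGraph V} {A B A' B' X X' : Set V}
    (hABu : A ∪ B = Set.univ) (hABd : Disjoint A B)
    (hA'u : A' ∪ B' = Set.univ) (hA'd : Disjoint A' B')
    (h1 : ∀ u v, G.Adj u v → u ∉ X → v ∉ X → ¬(u ∈ A ∧ v ∈ A) ∧ ¬(u ∈ B ∧ v ∈ B))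
    (h1' : ∀ u v, G.Adj u v → u ∉ X' → v ∉ X' → ¬(u ∈ A' ∧ v ∈ A') ∧ ¬(u ∈ B' ∧ v ∈ B'))
    (hconn : (G.induce (X ∪ X')ᶜ).Connected) :
    (∀ v, v ∉ X ∪ X' → (v ∈ A ↔ v ∈ A')) ∨ (∀ v, v ∉ X ∪ X' → (v ∈ A ↔ v ∈ B')) := by
  have key : ∀ (a b : ↥((X ∪ X')ᶜ)) (_ : (G.induce (X ∪ X')ᶜ).Walk a b),
      (((a : V) ∈ A) ↔ ((a : V) ∈ A')) ↔ (((b : V) ∈ A) ↔ ((b : V) ∈ A')) := by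
    intro a b p
    induction p with
    | nil => exact Iff.rfl
    | @cons a c b hadj p ih =>
      obtain ⟨x, hx⟩ := a
      obtain ⟨y, hy⟩ := c
      have hGadj : G.Adj x y := hadj
      have haX : x ∉ X ∪ X' := hx
      have hcX : y ∉ X ∪ X' := hy
      have e1 := h1 x y hGadj (fun h => haX (Or.inl h)) (fun h => hcX (Or.inl h))
      have e1' := h1' x y hGadj (fun h => haX (Or.inr h)) (fun h => hcX (Or.inr h))
      have pa := part_mem_iff hABu hABd x
      have pc := part_mem_iff hABu hABd y
      have pa' := part_mem_iff hA'u hA'd x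
      have pc' := part_mem_iff hA'u hA'd y
      rw [← ih]
      exact step_iff pa pc pa' pc' e1 e1'
  by_cases hex : ∃ u0, u0 ∉ X ∪ X'
  · obtain ⟨u0, hu0⟩ := hex
    have hkey : ∀ v, (hv : v ∉ X ∪ X') →
        ((u0 ∈ A ↔ u0 ∈ A') ↔ (v ∈ A ↔ v ∈ A')) := by
      intro v hv
      obtain ⟨p⟩ := hconn.preconnected ⟨u0, hu0⟩ ⟨v, hv⟩
      exact key _ _ p
    by_cases h0 : u0 ∈ A ↔ u0 ∈ A'
    · left
      intro v hv
      exact (hkey v hv).mp h0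
    · right
      intro v hv
      have hne : ¬(v ∈ A ↔ v ∈ A') := fun h => h0 ((hkey v hv).mpr h)
      have pv := part_mem_iff hABu hABd v
      have pv' := part_mem_iff hA'u hA'd v
      tauto
  · push_neg at hex
    left
    intro v hv
    exact absurd (hex v) hv

/-- a vertex cover of the side graph is an odd cycle cover -/
lemma vc_occ {G : SimpleGraph V} {A B : Set V} (hABu : A ∪ B = Set.univ)
    {C : Set V} (hC : IsVertexCover (sideGraph G A B) C) : IsOddCycleCover G C := by
  classical
  refine ⟨SimpleGraph.Coloring.mk (fun v => if (v : V) ∈ A then (0 : Fin 2) else 1) ?_⟩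
  rintro ⟨x, hx⟩ ⟨y, hy⟩ hadj
  have hGadj : G.Adj x y := hadj
  have hnot : s(x, y) ∉ (sideGraph G A B).edgeSet := by
    intro hmem
    obtain ⟨w, hwC, hwm⟩ := hC _ hmem
    rw [Sym2.mem_iff] at hwm
    rcases hwm with rfl | rfl
    · exact hx hwC
    · exact hy hwC
  rw [SimpleGraph.mem_edgeSet] at hnot
  have hside : ¬((x ∈ A ∧ y ∈ A) ∨ (x ∈ B ∧ y ∈ B)) := fun h => hnot ⟨hGadj, h⟩
  have hxAB : x ∈ A ∪ B := hABu ▸ Set.mem_univ x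
  have hyAB : y ∈ A ∪ B := hABu ▸ Set.mem_univ y
  simp only [Set.mem_union] at hxAB hyAB
  by_cases hxA : x ∈ A <;> by_cases hyA : y ∈ A <;> simp [hxA, hyA] <;> tauto

end Align

section Pick

/-- choose pairwise-distinct representatives -/
lemma pick {ι : Type*} [DecidableEq ι] [Fintype V] [Nonempty V] (n : ℕ) (S : Finset ι)
    (Z : ι → Set V) (hS : S.card ≤ n) (hZ : ∀ i ∈ S, n ≤ (Z i).ncard) :
    ∃ f : ι → V, (∀ i ∈ S, f i ∈ Z i) ∧ ∀ i ∈ S, ∀ j ∈ S, i ≠ j → f i ≠ f j := by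
  classical
  induction S using Finset.induction with
  | empty => exact ⟨fun _ => Classical.arbitrary V, fun i hi => absurd hi (by simp),
      fun i hi => absurd hi (by simp)⟩
  | @insert a S ha ih =>
    have hcard : S.card ≤ n := by
      rw [Finset.card_insert_of_notMem ha] at hS; omega
    obtain ⟨f, hf1, hf2⟩ := ih hcard (fun i hi => hZ i (Finset.mem_insert_of_mem hi))
    have hZa : n ≤ (Z a).ncard := hZ a (Finset.mem_insert_self a S)
    have him : (f '' (S : Set ι)).ncard ≤ S.card := by
      calc (f '' (S : Set ι)).ncard ≤ (S : Set ι).ncard := Set.ncard_image_le (Set.toFinite _)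
        _ = S.card := Set.ncard_coe_finset S
    have hne : (Z a \ (f '' (S : Set ι))).Nonempty := by
      rw [Set.nonempty_iff_ne_empty]
      intro hemp
      have hsub : Z a ⊆ f '' (S : Set ι) := Set.diff_eq_empty.mp hemp
      have := Set.ncard_le_ncard hsub (Set.toFinite _)
      have hScard : S.card < n := by
        rw [Finset.card_insert_of_notMem ha] at hS; omega
      omega
    obtain ⟨x, hxZ, hxim⟩ := hne
    refine ⟨Function.update f a x, ?_, ?_⟩
    · intro i hi
      rcases Finset.mem_insert.mp hi with rfl | hi'
      · simp [hxZ]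
      · have hne' : i ≠ a := fun h => ha (h ▸ hi')
        rw [Function.update_of_ne hne']
        exact hf1 i hi'
    · intro i hi j hj hij
      rcases Finset.mem_insert.mp hi with rfl | hi' <;> rcases Finset.mem_insert.mp hj with rfl | hj'
      · exact absurd rfl hij
      · have hne' : j ≠ i := fun h => ha (h ▸ hj')
        rw [Function.update_self, Function.update_of_ne hne']
        intro h
        exact hxim ⟨j, hj', h.symm⟩
      · have hne' : i ≠ j := fun h => ha (h ▸ hi')
        rw [Function.update_self, Function.update_of_ne hne']
        intro h
        exact hxim ⟨i, hi', h⟩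
      · have hni : i ≠ a := fun h => ha (h ▸ hi')
        have hnj : j ≠ a := fun h => ha (h ▸ hj')
        rw [Function.update_of_ne hni, Function.update_of_ne hnj]
        exact hf2 i hi' j hj' hij

end Pick

section Greedy

lemma sym2_repr (z : Sym2 V) : ∃ a b : V, z = s(a, b) :=
  Sym2.ind (fun x y => ⟨x, y, rfl⟩) z

/-- greedy construction of a matching avoiding terminals -/
lemma greedy {k : ℕ} (H : SimpleGraph V) (s t : Fin k → V) (n : ℕ)
    (hyp : ∀ F : Finset V, F.card ≤ 2 * k + 2 * n → ∃ e ∈ H.edgeSet, ∀ x ∈ e, x ∉ F) :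
    ∀ S : Finset (Fin k), S.card ≤ n →
    ∃ (m : Fin k → Sym2 V) (u v : Fin k → V),
      (∀ i ∈ S, m i = s(u i, v i)) ∧ (∀ i ∈ S, m i ∈ H.edgeSet) ∧
      (∀ i ∈ S, ∀ j ∈ S, i ≠ j → ∀ x ∈ m i, x ∉ m j) ∧
      (∀ i ∈ S, ∀ j : Fin k, j ≠ i → s j ∉ m i ∧ t j ∉ m i) := by
  classical
  intro S
  induction S using Finset.induction with
  | empty =>
    intro _
    obtain ⟨e, -, -⟩ := hyp ∅ (by simp)
    obtain ⟨x0, y0, -⟩ := sym2_repr e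
    exact ⟨fun _ => e, fun _ => x0, fun _ => y0, by simp, by simp, by simp, by simp⟩
  | @insert a S ha ih =>
    intro hcard
    have hS : S.card ≤ n := by
      rw [Finset.card_insert_of_notMem ha] at hcard; omega
    obtain ⟨m, u, v, hm1, hm2, hm3, hm4⟩ := ih hS
    set F : Finset V := (Finset.univ.erase a).image s ∪ (Finset.univ.erase a).image t ∪
      S.biUnion (fun j => {u j, v j}) with hF
    have hFcard : F.card ≤ 2 * k + 2 * n := by
      have h1 : ((Finset.univ.erase a).image s).card ≤ k := by
        calc ((Finset.univ.erase a).image s).card ≤ (Finset.univ.erase a).card :=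
              Finset.card_image_le
          _ ≤ Finset.univ.card := Finset.card_erase_le.trans (le_refl _)
          _ = k := by simp
      have h2 : ((Finset.univ.erase a).image t).card ≤ k := by
        calc ((Finset.univ.erase a).image t).card ≤ (Finset.univ.erase a).card :=
              Finset.card_image_le
          _ ≤ Finset.univ.card := Finset.card_erase_le.trans (le_refl _)
          _ = k := by simp
      have h3 : (S.biUnion (fun j => ({u j, v j} : Finset V))).card ≤ 2 * n := by
        calc (S.biUnion (fun j => ({u j, v j} : Finset V))).card
            ≤ ∑ j ∈ S, ({u j, v j} : Finset V).card := Finset.card_biUnion_le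
          _ ≤ ∑ _j ∈ S, 2 := Finset.sum_le_sum (fun j _ => Finset.card_insert_le _ _ |>.trans (by simp))
          _ = 2 * S.card := by rw [Finset.sum_const, smul_eq_mul, mul_comm]
          _ ≤ 2 * n := by omega
      calc F.card ≤ ((Finset.univ.erase a).image s ∪ (Finset.univ.erase a).image t).card
            + (S.biUnion (fun j => ({u j, v j} : Finset V))).card := Finset.card_union_le _ _
        _ ≤ ((Finset.univ.erase a).image s).card + ((Finset.univ.erase a).image t).card
            + (S.biUnion (fun j => ({u j, v j} : Finset V))).card := by
              have := Finset.card_union_le ((Finset.univ.erase a).image s)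
                ((Finset.univ.erase a).image t)
              omega
        _ ≤ 2 * k + 2 * n := by omega
    obtain ⟨e, heE, heF⟩ := hyp F hFcard
    obtain ⟨x0, y0, hexy⟩ := sym2_repr e
    refine ⟨Function.update m a e, Function.update u a x0, Function.update v a y0, ?_, ?_, ?_, ?_⟩
    · intro i hi
      rcases Finset.mem_insert.mp hi with rfl | hi'
      · simp [hexy]
      · have hne : i ≠ a := fun h => ha (h ▸ hi')
        rw [Function.update_of_ne hne, Function.update_of_ne hne, Function.update_of_ne hne]
        exact hm1 i hi'
    · intro i hi
      rcases Finset.mem_insert.mp hi with rfl | hi'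
      · simp [heE]
      · have hne : i ≠ a := fun h => ha (h ▸ hi')
        rw [Function.update_of_ne hne]
        exact hm2 i hi'
    · intro i hi j hj hij x hx
      have key : ∀ l ∈ S, ∀ y ∈ e, y ∉ m l := by
        intro l hl y hy hmem
        have hyF : y ∈ F := by
          rw [hm1 l hl, Sym2.mem_iff] at hmem
          refine Finset.mem_union_right _ (Finset.mem_biUnion.mpr ⟨l, hl, ?_⟩)
          rcases hmem with rfl | rfl <;> simp
        exact heF y hy hyF
      rcases Finset.mem_insert.mp hi with rfl | hi' <;> rcases Finset.mem_insert.mp hj with rfl | hj'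
      · exact absurd rfl hij
      · have hnj : j ≠ i := fun h => ha (h ▸ hj')
        rw [Function.update_self] at hx
        rw [Function.update_of_ne hnj]
        exact key j hj' x hx
      · have hni : i ≠ j := fun h => ha (h ▸ hi')
        rw [Function.update_of_ne hni] at hx
        rw [Function.update_self]
        intro hxe
        exact key i hi' x hxe hx
      · have hni : i ≠ a := fun h => ha (h ▸ hi')
        have hnj : j ≠ a := fun h => ha (h ▸ hj')
        rw [Function.update_of_ne hni] at hx
        rw [Function.update_of_ne hnj]
        exact hm3 i hi' j hj' hij x hx
    · intro i hi j hji
      rcases Finset.mem_insert.mp hi with rfl | hi'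
      · rw [Function.update_self]
        constructor
        · intro hmem
          refine heF (s j) hmem ?_
          exact Finset.mem_union_left _ (Finset.mem_union_left _
            (Finset.mem_image_of_mem s (Finset.mem_erase.mpr ⟨hji, Finset.mem_univ j⟩)))
        · intro hmem
          refine heF (t j) hmem ?_
          exact Finset.mem_union_left _ (Finset.mem_union_right _
            (Finset.mem_image_of_mem t (Finset.mem_erase.mpr ⟨hji, Finset.mem_univ j⟩)))
      · have hne : i ≠ a := fun h => ha (h ▸ hi')
        rw [Function.update_of_ne hne]
        exact hm4 i hi' j hji

end Greedy

section MainLarge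

lemma main_large [Fintype V] {G : SimpleGraph V} {A' B' X' : Set V} {k : ℕ}
    (s t : Fin k → V) (I : Finset (Fin k))
    (hmin : IsMinOddCycleCover G X')
    (hA'u : A' ∪ B' = Set.univ)
    (hcard : 2 * k + 2 * I.card < X'.ncard) :
    ∃ m : Fin k → Sym2 V, ParityBreakingMatching G A' B' s t I m := by
  classical
  have hyp : ∀ F : Finset V, F.card ≤ 2 * k + 2 * I.card →
      ∃ e ∈ (sideGraph G A' B').edgeSet, ∀ x ∈ e, x ∉ F := by
    intro F hF
    by_contra hcon
    push_neg at hcon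
    have hvc : IsVertexCover (sideGraph G A' B') (↑F : Set V) := by
      intro e he
      obtain ⟨x, hx, hxF⟩ := hcon e he
      exact ⟨x, hxF, hx⟩
    have hocc := vc_occ hA'u hvc
    have := hmin.2 _ hocc
    rw [Set.ncard_coe_finset] at this
    omega
  obtain ⟨m, u, v, -, h2, h3, h4⟩ := greedy (sideGraph G A' B') s t I.card hyp I (le_refl _)
  exact ⟨m, h2, h3, h4⟩

end MainLarge

section FlipBound

lemma nbr_set_eq (G : SimpleGraph V) (w : V) (S : Set V) :
    {y | G.Adj w y ∧ y ∈ S} = G.neighborSet w ∩ S := by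
  ext y
  simp [SimpleGraph.mem_neighborSet]

lemma flip_bound [Fintype V] {G : SimpleGraph V} {A B B' X X' : Set V} {d τ : ℕ}
    (hdeg : ∀ v, d ≤ (G.neighborSet v).ncard)
    (hABu : A ∪ B = Set.univ) (hABd : Disjoint A B)
    (hip : InducesPartition G X A B)
    (hX : X.ncard ≤ τ) (hX' : X'.ncard ≤ τ)
    (halignB : ∀ v, v ∉ X ∪ X' → v ∈ B → v ∈ B')
    {w : V} (hwA : w ∈ A) :
    d ≤ 2 * (G.neighborSet w ∩ (B' \ X')).ncard + 3 * τ := by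
  set N := G.neighborSet w with hN
  set a := (N ∩ (A \ X)).ncard with ha
  set b := (N ∩ (B \ X)).ncard with hb
  set b' := (N ∩ (B' \ X')).ncard with hb'
  have h1 : N.ncard ≤ a + b + X.ncard := by
    have hsub : N ⊆ (N ∩ (A \ X)) ∪ (N ∩ (B \ X)) ∪ X := by
      intro z hz
      by_cases hzX : z ∈ X
      · exact Or.inr hzX
      · have hzAB : z ∈ A ∪ B := hABu ▸ Set.mem_univ z
        rcases hzAB with h | h
        · exact Or.inl (Or.inl ⟨hz, h, hzX⟩)
        · exact Or.inl (Or.inr ⟨hz, h, hzX⟩)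
    calc N.ncard ≤ ((N ∩ (A \ X)) ∪ (N ∩ (B \ X)) ∪ X).ncard :=
          Set.ncard_le_ncard hsub (Set.toFinite _)
      _ ≤ ((N ∩ (A \ X)) ∪ (N ∩ (B \ X))).ncard + X.ncard := Set.ncard_union_le _ _
      _ ≤ a + b + X.ncard := by
          have := Set.ncard_union_le (N ∩ (A \ X)) (N ∩ (B \ X))
          omega
  have h2 : a ≤ b := by
    by_cases hwX : w ∈ X
    · have hcl := hip.2 w hwX
      have heqA : {y | G.Adj w y ∧ y ∈ A \ X} = N ∩ (A \ X) := nbr_set_eq G w _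
      have heqB : {y | G.Adj w y ∧ y ∈ B \ X} = N ∩ (B \ X) := nbr_set_eq G w _
      rw [heqA, heqB] at hcl
      by_contra hab
      push_neg at hab
      have hwB : w ∈ B := hcl.2 (by omega)
      exact Set.disjoint_left.mp hABd hwA hwB
    · have hempty : N ∩ (A \ X) = ∅ := by
        ext z
        simp only [Set.mem_inter_iff, Set.mem_empty_iff_false, iff_false]
        rintro ⟨hzN, hzA, hzX⟩
        exact (hip.1 w z hzN hwX hzX).1 ⟨hwA, hzA⟩
      rw [ha, hempty, Set.ncard_empty]
      omega
  have h3 : b ≤ b' + X'.ncard := by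
    have hsub : N ∩ (B \ X) ⊆ (N ∩ (B' \ X')) ∪ X' := by
      rintro z ⟨hzN, hzB, hzX⟩
      by_cases hzX' : z ∈ X'
      · exact Or.inr hzX'
      · have : z ∉ X ∪ X' := fun h => h.elim hzX hzX'
        exact Or.inl ⟨hzN, halignB z this hzB, hzX'⟩
    calc b ≤ ((N ∩ (B' \ X')) ∪ X').ncard := Set.ncard_le_ncard hsub (Set.toFinite _)
      _ ≤ b' + X'.ncard := Set.ncard_union_le _ _
  have h0 := hdeg w
  rw [← hN] at h0
  omega

end FlipBound

section MainSmall

lemma main_small [Fintype V] [Nonempty V] {G : SimpleGraph V} {A B A' B' X X' : Set V} {k : ℕ}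
    (s t : Fin k → V) (I : Finset (Fin k)) (m : Fin k → Sym2 V)
    (hdeg : ∀ v, 26 * k + 24 * I.card ≤ (G.neighborSet v).ncard)
    (hABu : A ∪ B = Set.univ) (hABd : Disjoint A B)
    (hA'u : A' ∪ B' = Set.univ) (hA'd : Disjoint A' B')
    (hip : InducesPartition G X A B) (hip' : InducesPartition G X' A' B')
    (hX : X.ncard ≤ 2 * k + 2 * I.card) (hX' : X'.ncard ≤ 2 * k + 2 * I.card)
    (halign : ∀ v, v ∉ X ∪ X' → (v ∈ A ↔ v ∈ A'))
    (hm : ParityBreakingMatching G A B s t I m) :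
    ∃ m' : Fin k → Sym2 V, ParityBreakingMatching G A' B' s t I m' := by
  classical
  -- representatives of the matching edges
  have hrep : ∀ i : Fin k, ∃ pr : V × V, m i = s(pr.1, pr.2) := by
    intro i
    obtain ⟨a, b, hab⟩ := sym2_repr (m i)
    exact ⟨(a, b), hab⟩
  choose p hp using hrep
  -- the forbidden set
  set T : Finset V := Finset.univ.image s ∪ Finset.univ.image t ∪
    I.biUnion (fun j => {(p j).1, (p j).2}) with hT
  have hTcard : T.card ≤ 2 * k + 2 * I.card := by
    have h1 : (Finset.univ.image s).card ≤ k := by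
      calc (Finset.univ.image s).card ≤ Finset.univ.card := Finset.card_image_le
        _ = k := by simp
    have h2 : (Finset.univ.image t).card ≤ k := by
      calc (Finset.univ.image t).card ≤ Finset.univ.card := Finset.card_image_le
        _ = k := by simp
    have h3 : (I.biUnion (fun j => ({(p j).1, (p j).2} : Finset V))).card ≤ 2 * I.card := by
      calc (I.biUnion (fun j => ({(p j).1, (p j).2} : Finset V))).card
          ≤ ∑ j ∈ I, ({(p j).1, (p j).2} : Finset V).card := Finset.card_biUnion_le
        _ ≤ ∑ _j ∈ I, 2 := Finset.sum_le_sum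
            (fun j _ => Finset.card_insert_le _ _ |>.trans (by simp))
        _ = 2 * I.card := by rw [Finset.sum_const, smul_eq_mul, mul_comm]
    calc T.card ≤ (Finset.univ.image s ∪ Finset.univ.image t).card
          + (I.biUnion (fun j => ({(p j).1, (p j).2} : Finset V))).card := Finset.card_union_le _ _
      _ ≤ (Finset.univ.image s).card + (Finset.univ.image t).card
          + (I.biUnion (fun j => ({(p j).1, (p j).2} : Finset V))).card := by
            have := Finset.card_union_le (Finset.univ.image s) (Finset.univ.image t)
            omega
      _ ≤ 2 * k + 2 * I.card := by omega
  have hTs : ∀ j : Fin k, s j ∈ T := fun j =>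
    Finset.mem_union_left _ (Finset.mem_union_left _ (Finset.mem_image_of_mem s (Finset.mem_univ j)))
  have hTt : ∀ j : Fin k, t j ∈ T := fun j =>
    Finset.mem_union_left _ (Finset.mem_union_right _ (Finset.mem_image_of_mem t (Finset.mem_univ j)))
  have hTm : ∀ j ∈ I, ∀ x ∈ m j, x ∈ T := by
    intro j hj x hx
    rw [hp j, Sym2.mem_iff] at hx
    refine Finset.mem_union_right _ (Finset.mem_biUnion.mpr ⟨j, hj, ?_⟩)
    rcases hx with rfl | rfl <;> simp
  -- alignment in both directions
  have halignB : ∀ v, v ∉ X ∪ X' → v ∈ B → v ∈ B' := by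
    intro v hv hvB
    have h1 := part_mem_iff hABu hABd v
    have h2 := part_mem_iff hA'u hA'd v
    have h3 := halign v hv
    tauto
  have halignA : ∀ v, v ∉ X ∪ X' → v ∈ A → v ∈ A' := fun v hv hvA => (halign v hv).mp hvA
  -- bad indices get a repair vertex and a large candidate set
  have hbad : ∀ i : Fin k, ∃ (w : V) (Zs : Set V),
      (i ∈ I ∧ m i ∉ (sideGraph G A' B').edgeSet) →
      (w ∈ m i ∧ I.card ≤ Zs.ncard ∧
        ∀ z ∈ Zs, G.Adj w z ∧ ((w ∈ A' ∧ z ∈ A') ∨ (w ∈ B' ∧ z ∈ B')) ∧ z ∉ T) := by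
    intro i
    by_cases hcond : i ∈ I ∧ m i ∉ (sideGraph G A' B').edgeSet
    swap
    · exact ⟨Classical.arbitrary V, ∅, fun h => absurd h hcond⟩
    obtain ⟨hiI, hbadi⟩ := hcond
    have hmem := hm.1 i hiI
    rw [hp i, SimpleGraph.mem_edgeSet] at hmem
    obtain ⟨hadj, hside⟩ := hmem
    rw [hp i] at hbadi
    have hside' : ¬(((p i).1 ∈ A' ∧ (p i).2 ∈ A') ∨ ((p i).1 ∈ B' ∧ (p i).2 ∈ B')) :=
      fun h => hbadi ((SimpleGraph.mem_edgeSet _).mpr ⟨hadj, h⟩)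
    have pu' := part_mem_iff hA'u hA'd (p i).1
    have pv' := part_mem_iff hA'u hA'd (p i).2
    -- helper to build the conclusion given a flipped endpoint
    have build : ∀ w : V, w ∈ m i →
        (w ∈ A' → 26 * k + 24 * I.card ≤ 2 * (G.neighborSet w ∩ (A' \ X')).ncard
            + 3 * (2 * k + 2 * I.card) →
          ∃ (w' : V) (Zs : Set V), w' ∈ m i ∧ I.card ≤ Zs.ncard ∧
            ∀ z ∈ Zs, G.Adj w' z ∧ ((w' ∈ A' ∧ z ∈ A') ∨ (w' ∈ B' ∧ z ∈ B')) ∧ z ∉ T) ∧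
        (w ∈ B' → 26 * k + 24 * I.card ≤ 2 * (G.neighborSet w ∩ (B' \ X')).ncard
            + 3 * (2 * k + 2 * I.card) →
          ∃ (w' : V) (Zs : Set V), w' ∈ m i ∧ I.card ≤ Zs.ncard ∧
            ∀ z ∈ Zs, G.Adj w' z ∧ ((w' ∈ A' ∧ z ∈ A') ∨ (w' ∈ B' ∧ z ∈ B')) ∧ z ∉ T) := by
      intro w hwmi
      constructor
      · intro hwA' hbound
        refine ⟨w, (G.neighborSet w ∩ (A' \ X')) \ ↑T, hwmi, ?_, ?_⟩
        · have hsub : G.neighborSet w ∩ (A' \ X') ⊆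
              ((G.neighborSet w ∩ (A' \ X')) \ ↑T) ∪ ↑T := by
            intro z hz
            by_cases hzT : z ∈ (↑T : Set V)
            · exact Or.inr hzT
            · exact Or.inl ⟨hz, hzT⟩
          have h4 : (G.neighborSet w ∩ (A' \ X')).ncard ≤
              ((G.neighborSet w ∩ (A' \ X')) \ ↑T).ncard + T.card := by
            calc (G.neighborSet w ∩ (A' \ X')).ncard
                ≤ (((G.neighborSet w ∩ (A' \ X')) \ ↑T) ∪ ↑T).ncard :=
                  Set.ncard_le_ncard hsub (Set.toFinite _)
              _ ≤ ((G.neighborSet w ∩ (A' \ X')) \ ↑T).ncard + (↑T : Set V).ncard :=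
                  Set.ncard_union_le _ _
              _ = ((G.neighborSet w ∩ (A' \ X')) \ ↑T).ncard + T.card := by
                  rw [Set.ncard_coe_finset]
          omega
        · rintro z ⟨⟨hzN, hzA', hzX'⟩, hzT⟩
          exact ⟨hzN, Or.inl ⟨hwA', hzA'⟩, fun h => hzT (Finset.mem_coe.mpr h)⟩
      · intro hwB' hbound
        refine ⟨w, (G.neighborSet w ∩ (B' \ X')) \ ↑T, hwmi, ?_, ?_⟩
        · have hsub : G.neighborSet w ∩ (B' \ X') ⊆
              ((G.neighborSet w ∩ (B' \ X')) \ ↑T) ∪ ↑T := by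
            intro z hz
            by_cases hzT : z ∈ (↑T : Set V)
            · exact Or.inr hzT
            · exact Or.inl ⟨hz, hzT⟩
          have h4 : (G.neighborSet w ∩ (B' \ X')).ncard ≤
              ((G.neighborSet w ∩ (B' \ X')) \ ↑T).ncard + T.card := by
            calc (G.neighborSet w ∩ (B' \ X')).ncard
                ≤ (((G.neighborSet w ∩ (B' \ X')) \ ↑T) ∪ ↑T).ncard :=
                  Set.ncard_le_ncard hsub (Set.toFinite _)
              _ ≤ ((G.neighborSet w ∩ (B' \ X')) \ ↑T).ncard + (↑T : Set V).ncard :=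
                  Set.ncard_union_le _ _
              _ = ((G.neighborSet w ∩ (B' \ X')) \ ↑T).ncard + T.card := by
                  rw [Set.ncard_coe_finset]
          omega
        · rintro z ⟨⟨hzN, hzB', hzX'⟩, hzT⟩
          exact ⟨hzN, Or.inr ⟨hwB', hzB'⟩, fun h => hzT (Finset.mem_coe.mpr h)⟩
    have hu_mem : (p i).1 ∈ m i := by rw [hp i]; exact Sym2.mem_mk_left _ _
    have hv_mem : (p i).2 ∈ m i := by rw [hp i]; exact Sym2.mem_mk_right _ _
    rcases hside with ⟨huA, hvA⟩ | ⟨huB, hvB⟩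
    · -- both endpoints in A; one of them lies in B'
      have hcase : (p i).1 ∈ B' ∨ (p i).2 ∈ B' := by tauto
      rcases hcase with hw | hw
      · obtain ⟨w', Zs', h'⟩ := (build (p i).1 hu_mem).2 hw
          (flip_bound hdeg hABu hABd hip hX hX' halignB huA)
        exact ⟨w', Zs', fun _ => h'⟩
      · obtain ⟨w', Zs', h'⟩ := (build (p i).2 hv_mem).2 hw
          (flip_bound hdeg hABu hABd hip hX hX' halignB hvA)
        exact ⟨w', Zs', fun _ => h'⟩
    · -- both endpoints in B; one of them lies in A'
      have hcase : (p i).1 ∈ A' ∨ (p i).2 ∈ A' := by tauto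
      have hBAu : B ∪ A = Set.univ := by rw [Set.union_comm]; exact hABu
      have hBAd : Disjoint B A := hABd.symm
      rcases hcase with hw | hw
      · obtain ⟨w', Zs', h'⟩ := (build (p i).1 hu_mem).1 hw
          (flip_bound hdeg hBAu hBAd (ip_swap hip) hX hX' halignA huB)
        exact ⟨w', Zs', fun _ => h'⟩
      · obtain ⟨w', Zs', h'⟩ := (build (p i).2 hv_mem).1 hw
          (flip_bound hdeg hBAu hBAd (ip_swap hip) hX hX' halignA hvB)
        exact ⟨w', Zs', fun _ => h'⟩
  choose w Zs hwz using hbad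
  set Ibad : Finset (Fin k) := I.filter (fun i => m i ∉ (sideGraph G A' B').edgeSet) with hIbad
  have hIbadI : ∀ i ∈ Ibad, i ∈ I ∧ m i ∉ (sideGraph G A' B').edgeSet := by
    intro i hi
    exact Finset.mem_filter.mp hi
  obtain ⟨f, hf1, hf2⟩ := pick I.card Ibad Zs
    (Finset.card_le_card (Finset.filter_subset _ _))
    (fun i hi => ((hwz i (hIbadI i hi)).2.1))
  set m' : Fin k → Sym2 V := fun i => if i ∈ Ibad then s(w i, f i) else m i with hm'
  have hgood : ∀ i ∈ I, i ∉ Ibad → m i ∈ (sideGraph G A' B').edgeSet := by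
    intro i hiI hi
    by_contra hcon
    exact hi (Finset.mem_filter.mpr ⟨hiI, hcon⟩)
  have hwmem : ∀ i ∈ Ibad, w i ∈ m i := fun i hi => (hwz i (hIbadI i hi)).1
  have hZprop : ∀ i ∈ Ibad, G.Adj (w i) (f i) ∧
      ((w i ∈ A' ∧ f i ∈ A') ∨ (w i ∈ B' ∧ f i ∈ B')) ∧ f i ∉ T :=
    fun i hi => (hwz i (hIbadI i hi)).2.2 (f i) (hf1 i hi)
  refine ⟨m', ?_, ?_, ?_⟩
  · intro i hiI
    by_cases hib : i ∈ Ibad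
    · have : m' i = s(w i, f i) := by rw [hm']; simp [hib]
      rw [this, SimpleGraph.mem_edgeSet]
      exact ⟨(hZprop i hib).1, (hZprop i hib).2.1⟩
    · have : m' i = m i := by rw [hm']; simp [hib]
      rw [this]
      exact hgood i hiI hib
  · intro i hiI j hjI hij x hxi hxj
    have hdecomp : ∀ l, ∀ y : V, y ∈ m' l → (y ∈ m l ∨ (l ∈ Ibad ∧ y = f l)) := by
      intro l y hy
      by_cases hlb : l ∈ Ibad
      · have : m' l = s(w l, f l) := by rw [hm']; simp [hlb]
        rw [this, Sym2.mem_iff] at hy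
        rcases hy with rfl | rfl
        · exact Or.inl (hwmem l hlb)
        · exact Or.inr ⟨hlb, rfl⟩
      · have : m' l = m l := by rw [hm']; simp [hlb]
        rw [this] at hy
        exact Or.inl hy
    rcases hdecomp i x hxi with hxi' | ⟨hib, hxfi⟩ <;>
      rcases hdecomp j x hxj with hxj' | ⟨hjb, hxfj⟩
    · exact hm.2.1 i hiI j hjI hij x hxi' hxj'
    · exact (hZprop j hjb).2.2 (hxfj ▸ hTm i hiI x hxi')
    · exact (hZprop i hib).2.2 (hxfi ▸ hTm j hjI x hxj')
    · exact hf2 i hib j hjb hij (by rw [← hxfi, hxfj])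
  · intro i hiI j hji
    by_cases hib : i ∈ Ibad
    · have heq : m' i = s(w i, f i) := by rw [hm']; simp [hib]
      rw [heq]
      constructor
      · rw [Sym2.mem_iff]
        rintro (hsw | hsf)
        · exact (hm.2.2 i hiI j hji).1 (hsw ▸ hwmem i hib)
        · exact (hZprop i hib).2.2 (hsf ▸ hTs j)
      · rw [Sym2.mem_iff]
        rintro (hsw | hsf)
        · exact (hm.2.2 i hiI j hji).2 (hsw ▸ hwmem i hib)
        · exact (hZprop i hib).2.2 (hsf ▸ hTt j)
    · have heq : m' i = m i := by rw [hm']; simp [hib]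
      rw [heq]
      exact hm.2.2 i hiI j hji

end MainSmall

section NiceExists

lemma nice_exists [Fintype V] (G : SimpleGraph V) : ∃ A B : Set V, IsNicePartition G A B := by
  classical
  have hocc_univ : IsOddCycleCover G Set.univ := by
    refine ⟨SimpleGraph.Coloring.mk (fun v => (0 : Fin 2)) ?_⟩
    rintro ⟨x, hx⟩ _ _
    simp at hx
  have hne : {n | ∃ Y : Set V, IsOddCycleCover G Y ∧ Y.ncard = n}.Nonempty :=
    ⟨_, Set.univ, hocc_univ, rfl⟩
  obtain ⟨X, hXocc, hXcard⟩ := Nat.sInf_mem hne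
  have hXmin : ∀ Y : Set V, IsOddCycleCover G Y → X.ncard ≤ Y.ncard := by
    intro Y hY
    rw [hXcard]
    exact Nat.sInf_le ⟨Y, hY, rfl⟩
  obtain ⟨c⟩ := id hXocc
  set A0 : Set V := {v | ∃ h : v ∈ Xᶜ, c ⟨v, h⟩ = 0} with hA0
  set B0 : Set V := {v | ∃ h : v ∈ Xᶜ, c ⟨v, h⟩ ≠ 0} with hB0
  set A : Set V := A0 ∪ {x ∈ X |
      ¬({y | G.Adj x y ∧ y ∈ B0}.ncard < {y | G.Adj x y ∧ y ∈ A0}.ncard)} with hA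
  set B : Set V := B0 ∪ {x ∈ X |
      {y | G.Adj x y ∧ y ∈ B0}.ncard < {y | G.Adj x y ∧ y ∈ A0}.ncard} with hB
  have hA0X : A0 ⊆ Xᶜ := by rintro v ⟨h, -⟩; exact h
  have hB0X : B0 ⊆ Xᶜ := by rintro v ⟨h, -⟩; exact h
  have hAdiff : A \ X = A0 := by
    ext v
    constructor
    · rintro ⟨hv, hvX⟩
      rcases hv with h | ⟨h, -⟩
      · exact h
      · exact absurd h hvX
    · intro hv
      exact ⟨Or.inl hv, hA0X hv⟩
  have hBdiff : B \ X = B0 := by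
    ext v
    constructor
    · rintro ⟨hv, hvX⟩
      rcases hv with h | ⟨h, -⟩
      · exact h
      · exact absurd h hvX
    · intro hv
      exact ⟨Or.inl hv, hB0X hv⟩
  refine ⟨A, B, ?_, ?_, X, ⟨hXocc, hXmin⟩, ?_, ?_⟩
  · -- A ∪ B = univ
    ext v
    simp only [Set.mem_union, Set.mem_univ, iff_true]
    by_cases hvX : v ∈ X
    · by_cases hlt : {y | G.Adj v y ∧ y ∈ B0}.ncard < {y | G.Adj v y ∧ y ∈ A0}.ncard
      · exact Or.inr (Or.inr ⟨hvX, hlt⟩)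
      · exact Or.inl (Or.inr ⟨hvX, hlt⟩)
    · by_cases h0 : c ⟨v, hvX⟩ = 0
      · exact Or.inl (Or.inl ⟨hvX, h0⟩)
      · exact Or.inr (Or.inl ⟨hvX, h0⟩)
  · -- Disjoint
    rw [Set.disjoint_left]
    rintro v hvA hvB
    rcases hvA with ⟨h1, h2⟩ | ⟨h1, h2⟩ <;> rcases hvB with ⟨h3, h4⟩ | ⟨h3, h4⟩
    · exact h4 h2
    · exact h1 h3
    · exact h3 h1
    · exact h2 h4
  · -- clause 1
    intro x y hadj hxX hyX
    have hadj' : (G.induce Xᶜ).Adj ⟨x, hxX⟩ ⟨y, hyX⟩ := hadj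
    have hval := c.valid hadj'
    constructor
    · rintro ⟨hxA, hyA⟩
      have hx0 : c ⟨x, hxX⟩ = 0 := by
        rcases hxA with ⟨h, h0⟩ | ⟨h, -⟩
        · exact h0
        · exact absurd h hxX
      have hy0 : c ⟨y, hyX⟩ = 0 := by
        rcases hyA with ⟨h, h0⟩ | ⟨h, -⟩
        · exact h0
        · exact absurd h hyX
      exact hval (hx0.trans hy0.symm)
    · rintro ⟨hxB, hyB⟩
      have hx0 : c ⟨x, hxX⟩ ≠ 0 := by
        rcases hxB with ⟨h, h0⟩ | ⟨h, -⟩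
        · exact h0
        · exact absurd h hxX
      have hy0 : c ⟨y, hyX⟩ ≠ 0 := by
        rcases hyB with ⟨h, h0⟩ | ⟨h, -⟩
        · exact h0
        · exact absurd h hyX
      have hx1 : c ⟨x, hxX⟩ = 1 := by
        have := (c ⟨x, hxX⟩).isLt
        omega
      have hy1 : c ⟨y, hyX⟩ = 1 := by
        have := (c ⟨y, hyX⟩).isLt
        omega
      exact hval (hx1.trans hy1.symm)
  · -- clause 2
    intro x hxX
    rw [hAdiff, hBdiff]
    constructor
    · intro hlt
      exact Or.inr ⟨hxX, by omega⟩
    · intro hlt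
      exact Or.inr ⟨hxX, hlt⟩

end NiceExists

theorem stmt4 {V : Type u} [Fintype V] (k : ℕ) (hk : 0 < k) (I : Finset (Fin k))
    (G : SimpleGraph V) (hconn : KConnected G (26 * k + 24 * I.card))
    (s t : Fin k → V) (hst : Function.Injective (Sum.elim s t)) :
    (∃ A B : Set V, IsNicePartition G A B ∧
        ∃ m : Fin k → Sym2 V, ParityBreakingMatching G A B s t I m) ↔
      (∀ A B : Set V, IsNicePartition G A B →
        ∃ m : Fin k → Sym2 V, ParityBreakingMatching G A B s t I m) := by
  constructor
  · rintro ⟨A, B, ⟨hABu, hABd, X, hXmin, hXip⟩, m, hm⟩ A' B' ⟨hA'u, hA'd, X', hX'min, hX'ip⟩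
    rcases lt_or_ge (2 * k + 2 * I.card) X'.ncard with hlarge | hsmall
    · exact main_large s t I hX'min hA'u hlarge
    · have hXX'1 : X.ncard ≤ X'.ncard := hXmin.2 _ hX'min.1
      have hXle : X.ncard ≤ 2 * k + 2 * I.card := le_trans hXX'1 hsmall
      have hdeg : ∀ v, 26 * k + 24 * I.card ≤ (G.neighborSet v).ncard := mindeg hconn
      have hpos : 0 < Nat.card V := by
        have := hconn.1
        omega
      have hnonempty : Nonempty V := by
        rw [Nat.card_pos_iff] at hpos
        exact hpos.1
      have hunion : (X ∪ X').ncard < 26 * k + 24 * I.card := by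
        have := Set.ncard_union_le X X'
        omega
      have hconn2 := hconn.2 _ hunion
      rcases align hABu hABd hA'u hA'd hXip.1 hX'ip.1 hconn2 with hal | hal
      · exact main_small s t I m hdeg hABu hABd hA'u hA'd hXip hX'ip hXle hsmall hal hm
      · have hB'u : B' ∪ A' = Set.univ := by rw [Set.union_comm]; exact hA'u
        obtain ⟨m', hm'⟩ := main_small s t I m hdeg hABu hABd hB'u hA'd.symm hXip
          (ip_swap hX'ip) hXle hsmall hal hm
        exact ⟨m', pbm_comm hm'⟩
  · intro h
    obtain ⟨A, B, hn⟩ := nice_exists G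
    exact ⟨A, B, hn, h A B hn⟩
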